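/- Let α ∈ ℚ \ {0, ±1} and (t,u) ∈ ℚ² with u² = α²t⁴-(α²+1)²t²+4α², u ≠ 0, t ≠ 0. Define g_α(t) = -(t⁴+4)((α²-1)²t⁴+4(α²+1)²t²+4(α²-1)²)(α²t⁴-(α²+1)²t²+4α²). Then the point (-(t²-2)²/(4t²), (t²-2)/(8t³(α²-1)u)) satisfies g_α(t)·y² = x(x-1)(x - 2(1+α⁴)/(α²-1)²). -/

import Mathlib

theorem stmt_10 (α t u : ℚ) (h0 : α ≠ 0) (h1 : α ≠ 1) (h2 : α ≠ -1)
    (hu : u^2 = α^2*t^4 - (α^2+1)^2*t^2 + 4*α^2) (hu0 : u ≠ 0) (ht : t ≠ 0) :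
    let g := -(t^4+4)*((α^2-1)^2*t^4+4*(α^2+1)^2*t^2+4*(α^2-1)^2)*(α^2*t^4-(α^2+1)^2*t^2+4*α^2)
    let x := -(t^2-2)^2/(4*t^2)
    let y := (t^2-2)/(8*t^3*(α^2-1)*u)
    g * y^2 = x*(x-1)*(x - 2*(1+α^4)/(α^2-1)^2) := by
  intro g x y
  have ha : α^2 - 1 ≠ 0 := by
    intro h
    have : (α-1)*(α+1) = 0 := by ring_nf; linarith [h]
    rcases mul_eq_zero.mp this with h' | h'
    · exact h1 (by linarith)
    · exact h2 (by linarith)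
  simp only [g, x, y]
  have hq : α^2*t^4 - (α^2+1)^2*t^2 + 4*α^2 ≠ 0 := by
    rw [← hu]; exact pow_ne_zero 2 hu0
  have hx : (8*t^3*(α^2-1)*u)^2 = (8*t^3*(α^2-1))^2 * (α^2*t^4 - (α^2+1)^2*t^2 + 4*α^2) := by
    rw [mul_pow, hu]
  rw [div_pow, hx]
  field_simp [hq, show t^2*(t^2*α^2 - (α^2+1)^2) + 4*α^2 ≠ 0 by convert hq using 1; ring]
  ring
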